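/- Under the substitution counting BPS states, the Katz-Klemm-Vafa generating function satisfies: if \(\sum_{g,h} (-1)^g r_{g,h} (y^{1/2} - y^{-1/2})^{2g} q^h = \prod_{n \ge 1} (1-q^n)^{-20} (1 - yq^n)^{-2} (1 - y^{-1} q^n)^{-2}\) as an identity of formal series in \(q\) with Laurent polynomial coefficients in \(y^{1/2}\), then \(r_{g,h} = 0\) for \(g > h\) and \(r_{g,g} = (-1)^g (g+1)\). -/

import Mathlib

open PowerSeries LaurentPolynomial

namespace KKV

abbrev Rl : Type := LaurentPolynomial ℤ

instance : CoeFun Rl (fun _ => ℤ → ℤ) := ⟨fun p => p.coeff⟩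

/-- coefficients of `p` vanish above degree `d` -/
def lb (p : Rl) (d : ℤ) : Prop := ∀ m : ℤ, d < m → p m = 0

lemma lb_mul {p q : Rl} {a b : ℤ} (hp : lb p a) (hq : lb q b) : lb (p * q) (a + b) := by
  intro m hm
  rw [AddMonoidAlgebra.mul_apply, Finsupp.sum]
  refine Finset.sum_eq_zero fun x hx => ?_
  rw [Finsupp.sum]
  refine Finset.sum_eq_zero fun y hy => ?_
  have hx' : x ≤ a := by
    by_contra h; exact (Finsupp.mem_support_iff.mp hx) (hp x (lt_of_not_ge h))
  have hy' : y ≤ b := by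
    by_contra h; exact (Finsupp.mem_support_iff.mp hy) (hq y (lt_of_not_ge h))
  have : x + y ≠ m := by omega
  simp [this]

lemma top_mul {p q : Rl} {a b : ℤ} (hp : lb p a) (hq : lb q b) :
    (p * q) (a + b) = p a * q b := by
  rw [AddMonoidAlgebra.mul_apply, Finsupp.sum]
  rw [Finset.sum_eq_single a]
  · rw [Finsupp.sum, Finset.sum_eq_single b]
    · simp
    · intro y hy hyb
      have hy' : y ≤ b := by
        by_contra h; exact (Finsupp.mem_support_iff.mp hy) (hq y (lt_of_not_ge h))
      have : a + y ≠ a + b := by omega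
      simp [this]
    · intro hb
      have : q b = 0 := Finsupp.notMem_support_iff.mp hb
      simp [this]
  · intro x hx hxa
    have hx' : x ≤ a := by
      by_contra h; exact (Finsupp.mem_support_iff.mp hx) (hp x (lt_of_not_ge h))
    rw [Finsupp.sum]
    refine Finset.sum_eq_zero fun y hy => ?_
    have hy' : y ≤ b := by
      by_contra h; exact (Finsupp.mem_support_iff.mp hy) (hq y (lt_of_not_ge h))
    have : x + y ≠ a + b := by omega
    simp [this]
  · intro ha
    have : p a = 0 := Finsupp.notMem_support_iff.mp ha
    rw [Finsupp.sum]
    simp [this]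

end KKV

namespace KKV

/-- bound predicate on power series : coefficient of `X^k` has Laurent degree `≤ k` -/
def Bd (f : PowerSeries Rl) : Prop :=
  ∀ (k : ℕ) (m : ℤ), (k : ℤ) < m → (PowerSeries.coeff (R := Rl) k f) m = 0

lemma Bd.lb {f : PowerSeries Rl} (hf : Bd f) (k : ℕ) : lb (PowerSeries.coeff (R := Rl) k f) k :=
  fun m hm => hf k m hm

lemma one_apply (m : ℤ) : (1 : Rl) m = if 0 = m then 1 else 0 := by
  rw [← LaurentPolynomial.T_zero, LaurentPolynomial.T_apply]

lemma Bd_one : Bd 1 := by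
  intro k m hm
  rw [PowerSeries.coeff_one]
  split
  · subst ‹k = 0›; rw [one_apply]; simp; omega
  · simp

lemma Bd_zero : Bd 0 := by intro k m hm; simp

lemma Bd_add {f g : PowerSeries Rl} (hf : Bd f) (hg : Bd g) : Bd (f + g) := by
  intro k m hm
  rw [map_add, AddMonoidAlgebra.coeff_add, Finsupp.add_apply, hf k m hm, hg k m hm, add_zero]

lemma Bd_neg {f : PowerSeries Rl} (hf : Bd f) : Bd (-f) := by
  intro k m hm
  rw [map_neg, AddMonoidAlgebra.coeff_neg, Finsupp.neg_apply, hf k m hm, neg_zero]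

lemma Bd_mul {f g : PowerSeries Rl} (hf : Bd f) (hg : Bd g) : Bd (f * g) := by
  intro k m hm
  rw [PowerSeries.coeff_mul, AddMonoidAlgebra.coeff_sum, Finsupp.finset_sum_apply]
  refine Finset.sum_eq_zero fun p hp => ?_
  have hpk : p.1 + p.2 = k := Finset.HasAntidiagonal.mem_antidiagonal.mp hp
  have : ((p.1 : ℤ) + (p.2 : ℤ)) < m := by push_cast [← hpk] at hm ⊢; omega
  exact lb_mul (hf.lb p.1) (hg.lb p.2) m this

/-- the subring of power series with the degree-bound property -/
noncomputable def Sb : Subring (PowerSeries Rl) where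
  carrier := {f | Bd f}
  one_mem' := Bd_one
  zero_mem' := Bd_zero
  add_mem' := Bd_add
  neg_mem' := Bd_neg
  mul_mem' := Bd_mul

/-- extracting the top (diagonal) coefficients, as a ring hom -/
noncomputable def TP : Sb →+* PowerSeries ℤ where
  toFun f := PowerSeries.mk fun k => (PowerSeries.coeff (R := Rl) k f.1) k
  map_one' := by
    ext k
    rw [PowerSeries.coeff_mk]
    show (PowerSeries.coeff (R := Rl) k 1) k = _
    rw [PowerSeries.coeff_one, PowerSeries.coeff_one]
    split
    · subst ‹k = 0›; rw [one_apply]; simp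
    · simp
  map_mul' := by
    intro f g
    ext k
    rw [PowerSeries.coeff_mk, PowerSeries.coeff_mul]
    show (PowerSeries.coeff (R := Rl) k (f.1 * g.1)) k = _
    rw [PowerSeries.coeff_mul, AddMonoidAlgebra.coeff_sum, Finsupp.finset_sum_apply]
    refine Finset.sum_congr rfl fun p hp => ?_
    have hpk : p.1 + p.2 = k := Finset.HasAntidiagonal.mem_antidiagonal.mp hp
    have hk : ((p.1 : ℤ) + (p.2 : ℤ)) = k := by push_cast [← hpk]; ring
    rw [PowerSeries.coeff_mk, PowerSeries.coeff_mk, ← hk,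
      top_mul (f.2.lb p.1) (g.2.lb p.2)]
  map_zero' := by
    ext k
    rw [PowerSeries.coeff_mk]
    show (PowerSeries.coeff (R := Rl) k 0) k = _
    simp
  map_add' := by
    intro f g
    ext k
    rw [PowerSeries.coeff_mk, map_add]
    show (PowerSeries.coeff (R := Rl) k (f.1 + g.1)) k = _
    rw [map_add, AddMonoidAlgebra.coeff_add, Finsupp.add_apply, PowerSeries.coeff_mk, PowerSeries.coeff_mk]

end KKV

namespace KKV

open PowerSeries

noncomputable def fac (c : ℤ) (j : ℕ) : PowerSeries Rl :=
  1 - PowerSeries.C (R := Rl) (T c) * PowerSeries.X ^ j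

lemma fac_zero (j : ℕ) : fac 0 j = 1 - PowerSeries.X ^ j := by
  rw [fac, LaurentPolynomial.T_zero, map_one, one_mul]

lemma coeff_fac (c : ℤ) (j k : ℕ) :
    PowerSeries.coeff (R := Rl) k (fac c j) =
      (if k = 0 then 1 else 0) - (if k = j then T c else 0) := by
  rw [fac, map_sub, PowerSeries.coeff_one, coeff_C_mul, PowerSeries.coeff_X_pow]
  split <;> split <;> simp

lemma Bd_fac {c : ℤ} {j : ℕ} (h : c ≤ j) : Bd (fac c j) := by
  intro k m hm
  rw [coeff_fac, AddMonoidAlgebra.coeff_sub, Finsupp.sub_apply]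
  have h1 : ((if k = 0 then (1 : Rl) else 0)) m = 0 := by
    split
    · rename_i hk; subst hk; rw [one_apply]
      have : (0 : ℤ) ≠ m := by omega
      simp [this]
    · simp
  have h2 : ((if k = j then T c else (0 : Rl))) m = 0 := by
    split
    · rename_i hk; subst hk; rw [LaurentPolynomial.T_apply]
      have : c ≠ m := by omega
      simp [this]
    · simp
  rw [h1, h2, sub_zero]

end KKV

namespace KKV

lemma TP_coeff (f : Sb) (k : ℕ) :
    PowerSeries.coeff (R := ℤ) k (TP f) = (PowerSeries.coeff (R := Rl) k f.1) k := by
  rw [TP]; simp only [RingHom.coe_mk, MonoidHom.coe_mk, OneHom.coe_mk, PowerSeries.coeff_mk]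

lemma TP_fac_lt {c : ℤ} {j : ℕ} (hj : 0 < j) (h : c < j) : TP ⟨fac c j, Bd_fac h.le⟩ = 1 := by
  ext k
  rw [TP_coeff, PowerSeries.coeff_one, coeff_fac, AddMonoidAlgebra.coeff_sub, Finsupp.sub_apply]
  rcases eq_or_ne k 0 with h0 | h0
  · subst h0
    have hj' : 0 ≠ j := by omega
    rw [if_pos rfl, if_neg hj', one_apply, AddMonoidAlgebra.coeff_zero, Finsupp.zero_apply]
    simp
  · rw [if_neg h0, if_neg h0, AddMonoidAlgebra.coeff_zero, Finsupp.zero_apply]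
    split
    · rename_i hk; subst hk
      rw [LaurentPolynomial.T_apply]
      have : c ≠ (k : ℤ) := by omega
      simp [this]
    · simp

lemma TP_fac_one : TP ⟨fac 1 1, Bd_fac (by norm_num)⟩ =
    1 - PowerSeries.X := by
  ext k
  rw [TP_coeff, map_sub, PowerSeries.coeff_one, PowerSeries.coeff_X, coeff_fac,
    AddMonoidAlgebra.coeff_sub, Finsupp.sub_apply]
  rcases eq_or_ne k 0 with h0 | h0
  · subst h0
    rw [if_pos rfl, if_neg (by omega), one_apply, AddMonoidAlgebra.coeff_zero, Finsupp.zero_apply]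
    simp
  · rcases eq_or_ne k 1 with h1 | h1
    · subst h1
      rw [if_neg h0, if_pos rfl, LaurentPolynomial.T_apply, AddMonoidAlgebra.coeff_zero, Finsupp.zero_apply]
      simp
    · rw [if_neg h0, if_neg h1, AddMonoidAlgebra.coeff_zero, Finsupp.zero_apply, if_neg h0, if_neg h1]

end KKV

namespace KKV

noncomputable def Qfac (n : ℕ) : PowerSeries Rl :=
  (1 - (PowerSeries.X : PowerSeries Rl) ^ (n + 1)) ^ 20 *
    (1 - PowerSeries.C (R := Rl) (T 1) * PowerSeries.X ^ (n + 1)) ^ 2 *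
    (1 - PowerSeries.C (R := Rl) (T (-1)) * PowerSeries.X ^ (n + 1)) ^ 2

noncomputable def QfacS (n : ℕ) : Sb :=
  (⟨fac 0 (n + 1), Bd_fac (by exact_mod_cast Nat.zero_le _)⟩ : Sb) ^ 20 *
    (⟨fac 1 (n + 1), Bd_fac (by exact_mod_cast Nat.one_le_iff_ne_zero.mpr (Nat.succ_ne_zero n))⟩ : Sb) ^ 2 *
    (⟨fac (-1) (n + 1), Bd_fac (by omega)⟩ : Sb) ^ 2

lemma QfacS_val (n : ℕ) : (QfacS n).1 = Qfac n := by
  show (fac 0 (n + 1)) ^ 20 * (fac 1 (n + 1)) ^ 2 * (fac (-1) (n + 1)) ^ 2 = _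
  rw [Qfac, fac_zero, fac, fac]

lemma TP_QfacS_zero : TP (QfacS 0) = (1 - PowerSeries.X) ^ 2 := by
  rw [QfacS, map_mul, map_mul, map_pow, map_pow, map_pow]
  have h1 : (⟨fac 0 1, _⟩ : Sb) = ⟨fac 0 1, Bd_fac (by norm_num : (0:ℤ) ≤ (1:ℕ))⟩ := rfl
  rw [show (⟨fac 0 (0 + 1), Bd_fac (by exact_mod_cast Nat.zero_le _)⟩ : Sb)
      = ⟨fac 0 1, Bd_fac (show (0:ℤ) < ((1:ℕ):ℤ) by norm_num).le⟩ from rfl,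
    TP_fac_lt (by norm_num) (by norm_num)]
  rw [show (⟨fac 1 (0 + 1), _⟩ : Sb) = ⟨fac 1 1, Bd_fac (by norm_num)⟩ from rfl, TP_fac_one]
  rw [show (⟨fac (-1) (0 + 1), _⟩ : Sb)
      = ⟨fac (-1) 1, Bd_fac (show (-1:ℤ) < ((1:ℕ):ℤ) by norm_num).le⟩ from rfl,
    TP_fac_lt (by norm_num) (by norm_num)]
  ring

lemma TP_QfacS_pos {n : ℕ} (hn : 0 < n) : TP (QfacS n) = 1 := by
  rw [QfacS, map_mul, map_mul, map_pow, map_pow, map_pow]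
  rw [show (⟨fac 0 (n + 1), Bd_fac (by exact_mod_cast Nat.zero_le _)⟩ : Sb)
      = ⟨fac 0 (n + 1), Bd_fac (show (0:ℤ) < ((n+1:ℕ):ℤ) by omega).le⟩ from rfl,
    TP_fac_lt (by omega) (by omega)]
  rw [show (⟨fac 1 (n + 1), _⟩ : Sb)
      = ⟨fac 1 (n + 1), Bd_fac (show (1:ℤ) < ((n+1:ℕ):ℤ) by omega).le⟩ from rfl,
    TP_fac_lt (by omega) (by omega)]
  rw [show (⟨fac (-1) (n + 1), _⟩ : Sb)
      = ⟨fac (-1) (n + 1), Bd_fac (show (-1:ℤ) < ((n+1:ℕ):ℤ) by omega).le⟩ from rfl,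
    TP_fac_lt (by omega) (by omega)]
  ring

end KKV

namespace KKV

noncomputable def QS (N : ℕ) : Sb := ∏ n ∈ Finset.range N, QfacS n

lemma QS_val (N : ℕ) : (QS N).1 = ∏ n ∈ Finset.range N, Qfac n := by
  rw [QS, SubmonoidClass.coe_finset_prod]
  exact Finset.prod_congr rfl fun n _ => QfacS_val n

lemma TP_QS {N : ℕ} (hN : 0 < N) : TP (QS N) = (1 - PowerSeries.X) ^ 2 := by
  rw [QS, map_prod]
  rw [Finset.prod_eq_single_of_mem 0 (Finset.mem_range.mpr hN)]
  · exact TP_QfacS_zero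
  · intro n _ hn
    exact TP_QfacS_pos (Nat.pos_of_ne_zero hn)

lemma constCoeff_Qfac (n : ℕ) : PowerSeries.constantCoeff (R := Rl) (Qfac n) = 1 := by
  rw [Qfac]
  simp [pow_succ]

lemma coeff_zero_QS (N : ℕ) : PowerSeries.coeff (R := Rl) 0 ((QS N).1) = 1 := by
  rw [PowerSeries.coeff_zero_eq_constantCoeff, QS_val, map_prod]
  refine Finset.prod_eq_one fun n _ => constCoeff_Qfac n

end KKV

namespace KKV

noncomputable def sP : Rl := T 1 - 2 + T (-1)

lemma two_apply (m : ℤ) : (2 : Rl) m = if 0 = m then 2 else 0 := by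
  rw [show (2 : Rl) = 1 + 1 by norm_num, AddMonoidAlgebra.coeff_add, Finsupp.add_apply, one_apply]
  split <;> norm_num

lemma lb_sP : lb sP 1 := by
  intro m hm
  rw [sP, AddMonoidAlgebra.coeff_add, Finsupp.add_apply, AddMonoidAlgebra.coeff_sub, Finsupp.sub_apply, LaurentPolynomial.T_apply,
    LaurentPolynomial.T_apply, two_apply]
  rw [if_neg (by omega), if_neg (by omega), if_neg (by omega)]
  ring

lemma sP_top : sP 1 = 1 := by
  rw [sP, AddMonoidAlgebra.coeff_add, Finsupp.add_apply, AddMonoidAlgebra.coeff_sub, Finsupp.sub_apply, LaurentPolynomial.T_apply,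
    LaurentPolynomial.T_apply, two_apply]
  rw [if_pos rfl, if_neg (by omega), if_neg (by omega)]
  ring

lemma lb_one' : lb 1 0 := by
  intro m hm
  rw [one_apply, if_neg (by omega)]

lemma lb_sP_pow (g : ℕ) : lb (sP ^ g) g := by
  induction g with
  | zero => simpa using lb_one'
  | succ g ih =>
      rw [pow_succ]
      intro m hm
      exact lb_mul ih lb_sP m (by push_cast at hm ⊢; omega)

lemma sP_pow_top (g : ℕ) : (sP ^ g) g = 1 := by
  induction g with
  | zero => rw [pow_zero, one_apply]; norm_num
  | succ g ih =>
      have := top_mul (lb_sP_pow g) lb_sP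
      rw [pow_succ]
      have hc : ((g : ℤ) + 1) = ((g + 1 : ℕ) : ℤ) := by push_cast; ring
      rw [← hc, this, ih, sP_top, one_mul]

lemma smul_apply' (z : ℤ) (p : Rl) (m : ℤ) : (z • p) m = z * p m := by
  rw [AddMonoidAlgebra.coeff_smul_apply, smul_eq_mul]

end KKV

namespace KKV
lemma lcongr {p q : Rl} (h : p = q) (m : ℤ) : p m = q m := by rw [h]
end KKV

open KKV

/-- Katz–Klemm–Vafa: writing `s = (y^{1/2} - y^{-1/2})² = y - 2 + y⁻¹` (a Laurent
polynomial), suppose `∑_{g,h} (-1)ᵍ r_{g,h} sᵍ qʰ = ∏_{n≥1} (1-qⁿ)^{-20}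
(1-yqⁿ)^{-2} (1-y⁻¹qⁿ)^{-2}` as formal series in `q` with Laurent-polynomial
coefficients (the identity being expressed via truncated products).  Then
`r_{g,h} = 0` for `g > h` and `r_{g,g} = (-1)ᵍ (g+1)`. -/
theorem stmt_9 (r : ℕ → ℕ → ℤ)
    (hfin : ∀ h : ℕ, {g : ℕ | r g h ≠ 0}.Finite)
    (hid : ∀ N k : ℕ, k ≤ N →
      (PowerSeries.coeff (R := LaurentPolynomial ℤ) k)
        ((PowerSeries.mk fun h : ℕ =>
            ∑ᶠ g : ℕ, ((-1 : ℤ) ^ g * r g h) •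
              ((LaurentPolynomial.T 1 - 2 + LaurentPolynomial.T (-1) :
                LaurentPolynomial ℤ)) ^ g) *
          ∏ n ∈ Finset.range N,
            ((1 - (PowerSeries.X : PowerSeries (LaurentPolynomial ℤ)) ^ (n + 1)) ^ 20 *
              (1 - PowerSeries.C (R := LaurentPolynomial ℤ) (LaurentPolynomial.T 1) *
                  PowerSeries.X ^ (n + 1)) ^ 2 *
              (1 - PowerSeries.C (R := LaurentPolynomial ℤ) (LaurentPolynomial.T (-1)) *
                  PowerSeries.X ^ (n + 1)) ^ 2)) =
        (PowerSeries.coeff (R := LaurentPolynomial ℤ) k) 1) :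
    (∀ g h : ℕ, h < g → r g h = 0) ∧
      ∀ g : ℕ, r g g = (-1) ^ g * ((g : ℤ) + 1) := by
  classical
  set c : ℕ → Rl := fun h => ∑ᶠ g : ℕ, ((-1 : ℤ) ^ g * r g h) • sP ^ g with hc
  -- restated hypothesis
  have hid' : ∀ N k : ℕ, k ≤ N →
      PowerSeries.coeff (R := Rl) k (PowerSeries.mk c * (QS N).1) =
        if k = 0 then 1 else 0 := by
    intro N k hk
    have h1 := hid N k hk
    rw [PowerSeries.coeff_one] at h1
    rw [QS_val]
    exact h1
  have hQbd : ∀ N : ℕ, Bd (QS N).1 := fun N => (QS N).2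
  -- degree bound on c k
  have F2 : ∀ k : ℕ, lb (c k) k := by
    intro k
    induction k using Nat.strong_induction_on with
    | _ k ih =>
      intro m hm
      have h1 := hid' k k le_rfl
      rw [PowerSeries.coeff_mul] at h1
      have h2 := lcongr h1 m
      rw [AddMonoidAlgebra.coeff_sum, Finsupp.finset_sum_apply] at h2
      have hr : ((if k = 0 then (1 : Rl) else 0)) m = 0 := by
        split
        · rename_i h0; subst h0; rw [one_apply, if_neg (by omega)]
        · simp
      rw [hr] at h2
      rw [Finset.sum_eq_single_of_mem (k, 0)
        (Finset.HasAntidiagonal.mem_antidiagonal.mpr (by omega)) ?side] at h2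
      case side =>
        intro p hp hne
        have hpk : p.1 + p.2 = k := Finset.HasAntidiagonal.mem_antidiagonal.mp hp
        have hlt : p.1 < k := by
          rcases Nat.lt_or_ge p.1 k with h | h
          · exact h
          · exfalso; apply hne; have : p.1 = k := by omega
            have : p.2 = 0 := by omega
            exact Prod.ext (by omega) this
        rw [PowerSeries.coeff_mk]
        exact lb_mul (ih p.1 hlt) ((hQbd k).lb p.2) m (by push_cast [← hpk] at hm ⊢; omega)
      rw [PowerSeries.coeff_mk, coeff_zero_QS, mul_one] at h2
      exact h2
  -- top coefficients satisfy (mk ℓ)(1-X)² = 1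
  have hML : (PowerSeries.mk (fun k => c k k) : PowerSeries ℤ) *
      (1 - PowerSeries.X) ^ 2 = 1 := by
    ext k
    rw [PowerSeries.coeff_mul, PowerSeries.coeff_one]
    have h1 := hid' (k + 1) k (by omega)
    rw [PowerSeries.coeff_mul] at h1
    have h2 := lcongr h1 (k : ℤ)
    rw [AddMonoidAlgebra.coeff_sum, Finsupp.finset_sum_apply] at h2
    have hr : ((if k = 0 then (1 : Rl) else 0)) (k : ℤ) =
        if k = 0 then 1 else 0 := by
      split
      · rename_i h0; subst h0; rw [one_apply]; norm_num
      · simp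
    rw [hr] at h2
    rw [← h2]
    refine Finset.sum_congr rfl fun p hp => ?_
    have hpk : p.1 + p.2 = k := Finset.HasAntidiagonal.mem_antidiagonal.mp hp
    have hcast : ((p.1 : ℤ) + (p.2 : ℤ)) = (k : ℤ) := by push_cast [← hpk]; ring
    simp only [PowerSeries.coeff_mk]
    rw [← hcast, top_mul (F2 p.1) ((hQbd (k+1)).lb p.2)]
    congr 1
    have := TP_coeff (QS (k + 1)) p.2
    rw [TP_QS (by omega)] at this
    rw [← this]
  have hch : (PowerSeries.mk (fun n => ((Nat.choose (1 + n) 1 : ℕ) : ℤ)) :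
      PowerSeries ℤ) * (1 - PowerSeries.X) ^ 2 = 1 := by
    have h1 := PowerSeries.mk_one_pow_eq_mk_choose_add ℤ 1
    have h2 := PowerSeries.mk_one_mul_one_sub_eq_one (S := ℤ)
    calc (PowerSeries.mk fun n => ((Nat.choose (1 + n) 1 : ℕ) : ℤ)) *
          (1 - PowerSeries.X) ^ 2
        = ((PowerSeries.mk 1 : PowerSeries ℤ) ^ (1 + 1)) * (1 - PowerSeries.X) ^ 2 := by
          rw [h1]
      _ = ((PowerSeries.mk 1 : PowerSeries ℤ) * (1 - PowerSeries.X)) ^ 2 := by ring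
      _ = 1 := by rw [h2, one_pow]
  have F3 : ∀ k : ℕ, c k k = (k : ℤ) + 1 := by
    have heq : (PowerSeries.mk (fun k => c k k) : PowerSeries ℤ) =
        PowerSeries.mk (fun n => ((Nat.choose (1 + n) 1 : ℕ) : ℤ)) := by
      calc (PowerSeries.mk fun k => c k k)
          = (PowerSeries.mk fun k => c k k) *
            ((1 - PowerSeries.X) ^ 2 *
              PowerSeries.mk (fun n => ((Nat.choose (1 + n) 1 : ℕ) : ℤ))) := by
            rw [mul_comm ((1 - PowerSeries.X) ^ 2), hch, mul_one]
        _ = ((PowerSeries.mk fun k => c k k) * (1 - PowerSeries.X) ^ 2) *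
            PowerSeries.mk (fun n => ((Nat.choose (1 + n) 1 : ℕ) : ℤ)) := by ring
        _ = _ := by rw [hML, one_mul]
    intro k
    have := congrArg (PowerSeries.coeff (R := ℤ) k) heq
    rw [PowerSeries.coeff_mk, PowerSeries.coeff_mk] at this
    rw [this, Nat.choose_one_right]
    push_cast; ring
  -- rewrite c h as a finite sum
  have hcsum : ∀ h : ℕ, c h = ∑ g ∈ (hfin h).toFinset, ((-1 : ℤ) ^ g * r g h) • sP ^ g := by
    intro h
    rw [hc]
    refine finsum_eq_sum_of_support_subset _ fun g hg => ?_
    simp only [Function.mem_support, Ne, Set.Finite.coe_toFinset, Set.mem_setOf_eq] at hg ⊢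
    intro hrg
    exact hg (by rw [hrg, mul_zero, zero_smul])
  have hceval : ∀ (h : ℕ) (m : ℤ), c h m =
      ∑ g ∈ (hfin h).toFinset, ((-1 : ℤ) ^ g * r g h) * (sP ^ g) m := by
    intro h m
    rw [hcsum h, AddMonoidAlgebra.coeff_sum, Finsupp.finset_sum_apply]
    exact Finset.sum_congr rfl fun g _ => smul_apply' _ _ _
  -- the single-term evaluation
  have hsingle : ∀ (h g : ℕ), (∀ g' : ℕ, g < g' → r g' h = 0) →
      c h (g : ℤ) = (-1 : ℤ) ^ g * r g h := by
    intro h g hup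
    rw [hceval h g]
    rw [Finset.sum_eq_single g]
    · rw [sP_pow_top, mul_one]
    · intro g' hg' hne
      have hg'mem : r g' h ≠ 0 := by
        simpa using (Set.Finite.mem_toFinset _).mp hg'
      have hlt : g' < g := by
        rcases Nat.lt_or_ge g' g with h1 | h1
        · exact h1
        · exfalso; rcases Nat.lt_or_ge g g' with h2 | h2
          · exact hg'mem (hup g' h2)
          · exact hne (by omega)
      rw [lb_sP_pow g' g (by exact_mod_cast hlt), mul_zero]
    · intro hg
      have : r g h = 0 := by simpa using (Set.Finite.mem_toFinset _).not.mp hg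
      rw [this, mul_zero, zero_mul]
  -- first conclusion
  have goal1 : ∀ g h : ℕ, h < g → r g h = 0 := by
    intro g h hgh
    set B := ((hfin h).toFinset).sup id with hB
    have hbound : ∀ g' : ℕ, B < g' → r g' h = 0 := by
      intro g' hg'
      by_contra hne
      have : g' ∈ (hfin h).toFinset := (Set.Finite.mem_toFinset _).mpr hne
      have h7 : g' ≤ B := by simpa using Finset.le_sup (f := id) this
      omega
    have key : ∀ d g' : ℕ, B < g' + d → h < g' → r g' h = 0 := by
      intro d
      induction d with
      | zero => intro g' h1 _; exact hbound g' (by omega)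
      | succ d ihd =>
        intro g' h1 h2
        rcases Nat.lt_or_ge B (g' + d) with h3 | h3
        · exact ihd g' h3 h2
        · have hup : ∀ g'' : ℕ, g' < g'' → r g'' h = 0 := by
            intro g'' hgg
            rcases Nat.lt_or_ge h g'' with h4 | h4
            · exact ihd g'' (by omega) h4
            · omega
          have h5 := hsingle h g' hup
          have h6 : c h (g' : ℤ) = 0 := F2 h (g' : ℤ) (by exact_mod_cast h2)
          rw [h6] at h5
          have := h5.symm
          rcases mul_eq_zero.mp this with h7 | h7
          · exfalso; have : ((-1 : ℤ)) ^ g' ≠ 0 := by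
              apply pow_ne_zero; norm_num
            exact this h7
          · exact h7
    exact key (B + 1) g (by omega) hgh
  refine ⟨goal1, fun g => ?_⟩
  have hup : ∀ g' : ℕ, g < g' → r g' g = 0 := fun g' h => goal1 g' g h
  have h5 := hsingle g g hup
  rw [F3 g] at h5
  have h6 : ((-1 : ℤ) ^ g) * ((-1 : ℤ) ^ g * r g g) = ((-1 : ℤ) ^ g) * ((g : ℤ) + 1) := by
    rw [← h5]
  rw [← mul_assoc, ← pow_add] at h6
  rw [Even.neg_one_pow (Even.add_self g), one_mul] at h6
  exact h6
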